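/- There exists a constant C > 0 such that for every positive integer n, every set S ⊆ G_n in strictly convex position (i.e., every point of S is an extreme point of convexHull ℝ S) satisfies |S| ≤ C·n^(2/3). -/

import Mathlib

/-- The `n × n` integer grid `{1,…,n}²`, viewed in `ℝ²`. -/
def grid (n : ℕ) : Set (ℝ × ℝ) :=
  {p | ∃ a b : ℕ, 1 ≤ a ∧ a ≤ n ∧ 1 ≤ b ∧ b ≤ n ∧ p = ((a : ℝ), (b : ℝ))}

open Set

/-- `p` lies strictly above the line through `q` and `r` (when `q.1 < r.1`). -/
def Above (p q r : ℝ × ℝ) : Prop := (r.2 - q.2) * (p.1 - q.1) < (p.2 - q.2) * (r.1 - q.1)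

/-- `p` lies strictly below the line through `q` and `r` (when `q.1 < r.1`). -/
def Below (p q r : ℝ × ℝ) : Prop := (p.2 - q.2) * (r.1 - q.1) < (r.2 - q.2) * (p.1 - q.1)

lemma vert_openSegment {z1 z2 p : ℝ × ℝ} (h1 : z1.1 = p.1) (h2 : z2.1 = p.1)
    (hy1 : z1.2 < p.2) (hy2 : p.2 < z2.2) : p ∈ openSegment ℝ z1 z2 := by
  have hd : (0:ℝ) < z2.2 - z1.2 := by linarith
  refine ⟨(z2.2 - p.2) / (z2.2 - z1.2), (p.2 - z1.2) / (z2.2 - z1.2), ?_, ?_, ?_, ?_⟩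
  · apply div_pos (by linarith) hd
  · apply div_pos (by linarith) hd
  · field_simp; ring
  · apply Prod.ext
    · show (z2.2 - p.2) / (z2.2 - z1.2) * z1.1 + (p.2 - z1.2) / (z2.2 - z1.2) * z2.1 = p.1
      rw [h1, h2]; field_simp; ring
    · show (z2.2 - p.2) / (z2.2 - z1.2) * z1.2 + (p.2 - z1.2) / (z2.2 - z1.2) * z2.2 = p.2
      field_simp; ring

lemma seg_at {q r : ℝ × ℝ} {c : ℝ} (h1 : q.1 < c) (h2 : c < r.1) :
    ∃ z ∈ segment ℝ q r, z.1 = c ∧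
      z.2 * (r.1 - q.1) = q.2 * (r.1 - c) + r.2 * (c - q.1) := by
  have hd : (0:ℝ) < r.1 - q.1 := by linarith
  set t : ℝ := (c - q.1) / (r.1 - q.1) with ht
  refine ⟨(1 - t) • q + t • r, ⟨1 - t, t, ?_, ?_, by ring, rfl⟩, ?_, ?_⟩
  · have : t ≤ 1 := by rw [ht, div_le_one hd]; linarith
    linarith
  · rw [ht]; exact le_of_lt (div_pos (by linarith) hd)
  · show (1 - t) * q.1 + t * r.1 = c
    rw [ht]; field_simp; ring
  · show ((1 - t) * q.2 + t * r.2) * (r.1 - q.1) = q.2 * (r.1 - c) + r.2 * (c - q.1)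
    rw [ht]; field_simp; ring

lemma collinear_openSegment {p q r : ℝ × ℝ} (h1 : q.1 < p.1) (h2 : p.1 < r.1)
    (h : (p.2 - q.2) * (r.1 - q.1) = (r.2 - q.2) * (p.1 - q.1)) :
    p ∈ openSegment ℝ q r := by
  have hd : (0:ℝ) < r.1 - q.1 := by linarith
  set t : ℝ := (p.1 - q.1) / (r.1 - q.1) with ht
  refine ⟨1 - t, t, ?_, ?_, by ring, ?_⟩
  · have : t < 1 := by rw [ht, div_lt_one hd]; linarith
    linarith
  · rw [ht]; exact div_pos (by linarith) hd
  · apply Prod.ext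
    · show (1 - t) * q.1 + t * r.1 = p.1
      rw [ht]; field_simp; ring
    · show (1 - t) * q.2 + t * r.2 = p.2
      rw [ht]; field_simp; nlinarith [h]

section Extreme

variable {S : Set (ℝ × ℝ)} (hS : ∀ p ∈ S, p ∈ (convexHull ℝ S).extremePoints ℝ)

include hS

lemma extreme_dichotomy {p q r : ℝ × ℝ} (hp : p ∈ S) (hq : q ∈ S) (hr : r ∈ S)
    (h1 : q.1 < p.1) (h2 : p.1 < r.1) : Above p q r ∨ Below p q r := by
  rcases lt_trichotomy ((p.2 - q.2) * (r.1 - q.1)) ((r.2 - q.2) * (p.1 - q.1)) with h | h | h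
  · exact Or.inr h
  · exfalso
    have hmem := collinear_openSegment h1 h2 h
    have := ((mem_extremePoints).1 (hS p hp)).2 q (subset_convexHull ℝ S hq) r
      (subset_convexHull ℝ S hr) hmem
    have hh : q.1 = p.1 := congrArg Prod.fst this.1
    linarith
  · exact Or.inl h

lemma not_above_and_below {p q r q' r' : ℝ × ℝ} (hp : p ∈ S) (hq : q ∈ S) (hr : r ∈ S)
    (hq' : q' ∈ S) (hr' : r' ∈ S) (h1 : q.1 < p.1) (h2 : p.1 < r.1)
    (h1' : q'.1 < p.1) (h2' : p.1 < r'.1) (hab : Above p q r) (hbe : Below p q' r') : False := by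
  obtain ⟨z, hzseg, hz1, hz2⟩ := seg_at h1 h2
  obtain ⟨z', hzseg', hz1', hz2'⟩ := seg_at h1' h2'
  have hd : (0:ℝ) < r.1 - q.1 := by linarith
  have hd' : (0:ℝ) < r'.1 - q'.1 := by linarith
  have hzb : z.2 < p.2 := by
    rw [Above] at hab; nlinarith [hab, hz2]
  have hzb' : p.2 < z'.2 := by
    rw [Below] at hbe; nlinarith [hbe, hz2']
  have hzh : z ∈ convexHull ℝ S :=
    (convex_convexHull ℝ S).segment_subset (subset_convexHull ℝ S hq) (subset_convexHull ℝ S hr) hzseg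
  have hzh' : z' ∈ convexHull ℝ S :=
    (convex_convexHull ℝ S).segment_subset (subset_convexHull ℝ S hq') (subset_convexHull ℝ S hr') hzseg'
  have hmem := vert_openSegment hz1 hz1' hzb hzb'
  have := ((mem_extremePoints).1 (hS p hp)).2 z hzh z' hzh' hmem
  have : z.2 = p.2 := congrArg Prod.snd this.1
  linarith

lemma vert_between {p q r : ℝ × ℝ} (hp : p ∈ S) (hq : q ∈ S) (hr : r ∈ S)
    (e1 : q.1 = p.1) (e2 : r.1 = p.1) (hy1 : q.2 < p.2) (hy2 : p.2 < r.2) : False := by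
  have hmem := vert_openSegment e1 e2 hy1 hy2
  have := ((mem_extremePoints).1 (hS p hp)).2 q (subset_convexHull ℝ S hq) r
    (subset_convexHull ℝ S hr) hmem
  have : q.2 = p.2 := congrArg Prod.snd this.1
  linarith

end Extreme


lemma count_core (n K : ℕ) (hn : 1 ≤ n) (v : ℕ → ℤ × ℤ)
    (hinj : ∀ i < K, ∀ j < K, v i = v j → i = j)
    (hpos : ∀ i < K, 1 ≤ (v i).1)
    (hsum : (∑ i ∈ Finset.range K, ((v i).1 + |(v i).2|)) ≤ 3 * n) :
    (K : ℝ) ≤ 15 * (n : ℝ) ^ ((2 : ℝ) / 3) := by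
  have hn0 : (0:ℝ) < n := by exact_mod_cast hn
  set t : ℝ := (n : ℝ) ^ ((1:ℝ)/3) with htdef
  have ht0 : 0 < t := Real.rpow_pos_of_pos hn0 _
  have ht1 : 1 ≤ t := Real.one_le_rpow (by exact_mod_cast hn) (by norm_num)
  have ht3 : t ^ (3:ℕ) = n := by
    rw [htdef, ← Real.rpow_natCast ((n:ℝ) ^ ((1:ℝ)/3)) 3, ← Real.rpow_mul hn0.le]
    norm_num
  have ht2 : (n:ℝ) ^ ((2:ℝ)/3) = t ^ (2:ℕ) := by
    rw [htdef, ← Real.rpow_natCast ((n:ℝ) ^ ((1:ℝ)/3)) 2, ← Real.rpow_mul hn0.le]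
    norm_num
  set m : ℕ := ⌈t⌉₊ with hmdef
  have hm1 : 1 ≤ m := Nat.one_le_ceil_iff.2 ht0
  have hmt : t ≤ m := Nat.le_ceil t
  have hmt2 : (m:ℝ) ≤ t + 1 := (Nat.ceil_lt_add_one ht0.le).le
  classical
  set Sm := (Finset.range K).filter (fun i => (v i).1 + |(v i).2| ≤ (m:ℤ)) with hSm
  set G := (Finset.range K).filter (fun i => ¬ ((v i).1 + |(v i).2| ≤ (m:ℤ))) with hG
  -- card of Sm
  have hScard : Sm.card ≤ m * (2 * m + 1) := by
    have : Sm.card ≤ (Finset.Icc (1:ℤ) m ×ˢ Finset.Icc (-(m:ℤ)) m).card := by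
      apply Finset.card_le_card_of_injOn v
      · intro i hi
        simp only [hSm, Finset.coe_filter, Set.mem_setOf_eq, Finset.mem_filter, Finset.mem_range] at hi
        obtain ⟨hik, hile⟩ := hi
        have h1 := hpos i hik
        have h2 : (0:ℤ) ≤ |(v i).2| := abs_nonneg _
        simp only [Finset.mem_coe, Finset.mem_product, Finset.mem_Icc]
        refine ⟨⟨h1, by omega⟩, ?_⟩
        have : |(v i).2| ≤ m := by omega
        constructor <;> [exact neg_le_of_abs_le this; exact le_of_abs_le this]
      · intro i hi j hj hij
        simp only [hSm, Finset.coe_filter, Set.mem_setOf_eq, Finset.mem_range] at hi hj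
        exact hinj i hi.1 j hj.1 hij
    calc Sm.card ≤ _ := this
      _ = m * (2 * m + 1) := by
          rw [Finset.card_product, Int.card_Icc, Int.card_Icc]
          have e1 : ((m:ℤ) + 1 - 1).toNat = m := by omega
          have e2 : ((m:ℤ) + 1 - -(m:ℤ)).toNat = 2*m+1 := by omega
          rw [e1, e2]
  -- sum bound on G
  have hGsum : ((m:ℤ) + 1) * G.card ≤ 3 * n := by
    calc ((m:ℤ) + 1) * G.card = ∑ _i ∈ G, ((m:ℤ)+1) := by
          rw [Finset.sum_const, nsmul_eq_mul]; ring
      _ ≤ ∑ i ∈ G, ((v i).1 + |(v i).2|) := by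
          apply Finset.sum_le_sum
          intro i hi
          simp only [hG, Finset.mem_filter] at hi
          omega
      _ ≤ ∑ i ∈ Finset.range K, ((v i).1 + |(v i).2|) := by
          apply Finset.sum_le_sum_of_subset_of_nonneg (Finset.filter_subset _ _)
          intro i hi _
          have := hpos i (Finset.mem_range.1 hi)
          have := abs_nonneg (v i).2
          omega
      _ ≤ 3 * n := hsum
  have hsplit : Sm.card + G.card = K := by
    rw [hSm, hG, Finset.card_filter_add_card_filter_not, Finset.card_range]
  -- real arithmetic
  have hS' : (Sm.card : ℝ) ≤ 12 * t ^ (2:ℕ) := by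
    have h1 : (Sm.card : ℝ) ≤ (m:ℝ) * (2 * m + 1) := by exact_mod_cast hScard
    nlinarith [h1, hmt2, ht1]
  have hG' : (G.card : ℝ) ≤ 3 * t ^ (2:ℕ) := by
    have h1 : ((m:ℝ) + 1) * G.card ≤ 3 * n := by exact_mod_cast hGsum
    have h2 : t * G.card ≤ ((m:ℝ)+1) * G.card := by
      have : (0:ℝ) ≤ (G.card : ℝ) := Nat.cast_nonneg _
      nlinarith [hmt]
    have h3 : t * G.card ≤ 3 * t^(3:ℕ) := by rw [ht3]; linarith
    nlinarith [ht0, h3]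
  have : (K : ℝ) = (Sm.card : ℝ) + G.card := by exact_mod_cast hsplit.symm
  rw [this, ht2]; linarith

lemma grid_finite (n : ℕ) : (grid n).Finite := by
  apply Set.Finite.subset (Set.Finite.image (fun ab : ℕ × ℕ => ((ab.1 : ℝ), (ab.2 : ℝ)))
    (Set.finite_Icc ((1 : ℕ), (1 : ℕ)) (n, n)))
  rintro p ⟨a, b, h1, h2, h3, h4, hp⟩
  exact ⟨(a, b), by simp [Prod.le_def]; omega, hp.symm⟩

lemma chain_bound (n : ℕ) (hn : 0 < n) (W : Set (ℝ × ℝ)) (hWg : W ⊆ grid n)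
    (hconc : ∀ p ∈ W, ∀ q ∈ W, ∀ r ∈ W, q.1 < p.1 → p.1 < r.1 → Above p q r)
    (hcol : ∀ p ∈ W, ∀ q ∈ W, ∀ r ∈ W, p.1 = q.1 → q.1 = r.1 → p = q ∨ p = r ∨ q = r) :
    (W.ncard : ℝ) ≤ 32 * (n : ℝ) ^ ((2 : ℝ) / 3) := by
  classical
  have hfin : W.Finite := (grid_finite n).subset hWg
  have hn23 : (1:ℝ) ≤ (n:ℝ) ^ ((2:ℝ)/3) :=
    Real.one_le_rpow (by exact_mod_cast hn) (by norm_num)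
  set Wf := hfin.toFinset with hWf
  have hWmem : ∀ p, p ∈ Wf ↔ p ∈ W := fun p => hfin.mem_toFinset
  set X := Wf.image Prod.fst with hX
  set k := X.card with hk
  have hncard : W.ncard = Wf.card := Set.ncard_eq_toFinset_card W hfin
  have hcard2 : Wf.card ≤ 2 * k := by
    apply Finset.card_le_mul_card_image
    intro x hx
    by_contra hgt
    push_neg at hgt
    obtain ⟨p, hp, q, hq, r, hr, hpq, hpr, hqr⟩ := Finset.two_lt_card.1 hgt
    simp only [Finset.mem_filter] at hp hq hr
    have := hcol p ((hWmem p).1 hp.1) q ((hWmem q).1 hq.1) r ((hWmem r).1 hr.1)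
      (hp.2.trans hq.2.symm) (hq.2.trans hr.2.symm)
    tauto
  suffices hkb : (k : ℝ) ≤ 16 * (n:ℝ) ^ ((2:ℝ)/3) by
    have h1 : (W.ncard : ℝ) ≤ 2 * (k : ℝ) := by
      rw [hncard]; exact_mod_cast hcard2
    linarith
  by_cases hk1 : k ≤ 1
  · have : (k:ℝ) ≤ 1 := by exact_mod_cast hk1
    linarith
  push_neg at hk1
  -- monotone enumeration of x-coordinates
  set e := X.orderIsoOfFin rfl with he
  have hPex : ∀ i : Fin k, ∃ p, p ∈ W ∧ p.1 = ((e i : ℝ)) := by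
    intro i
    have hmem : ((e i : ℝ)) ∈ X := (e i).2
    simp only [hX, Finset.mem_image] at hmem
    obtain ⟨p, hp, hfst⟩ := hmem
    exact ⟨p, (hWmem p).1 hp, hfst⟩
  choose P hPW hPx using hPex
  have hgridc : ∀ i : Fin k, ∃ a b : ℕ, 1 ≤ a ∧ a ≤ n ∧ 1 ≤ b ∧ b ≤ n ∧
      P i = ((a : ℝ), (b : ℝ)) := fun i => hWg (hPW i)
  choose A B hA1 hA2 hB1 hB2 hPab using hgridc
  have hmono : ∀ i j : Fin k, i < j → (P i).1 < (P j).1 := by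
    intro i j hij
    rw [hPx, hPx]
    exact_mod_cast Subtype.coe_lt_coe.2 (e.strictMono hij)
  set K := k - 1 with hK
  set F : ℕ → Fin k := fun i => ⟨min i (k-1), by omega⟩ with hF
  set a : ℕ → ℤ := fun i => (A (F i) : ℤ) with ha
  set b : ℕ → ℤ := fun i => (B (F i) : ℤ) with hb
  have hab1 : ∀ i, 1 ≤ a i ∧ a i ≤ n := fun i =>
    ⟨by simp only [ha]; exact_mod_cast hA1 (F i), by simp only [ha]; exact_mod_cast hA2 (F i)⟩
  have hbb1 : ∀ i, 1 ≤ b i ∧ b i ≤ n := fun i =>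
    ⟨by simp only [hb]; exact_mod_cast hB1 (F i), by simp only [hb]; exact_mod_cast hB2 (F i)⟩
  have hPcoords : ∀ i : ℕ, P (F i) = (((a i : ℤ) : ℝ), ((b i : ℤ) : ℝ)) := by
    intro i; rw [hPab]; push_cast; rfl
  have hFlt : ∀ i j : ℕ, i < j → j ≤ K → F i < F j := by
    intro i j hij hj
    simp only [hF, Fin.mk_lt_mk]
    omega
  have hxmono : ∀ i j : ℕ, i < j → j ≤ K → ((a i : ℤ) : ℝ) < ((a j : ℤ) : ℝ) := by
    intro i j hij hj
    have := hmono (F i) (F j) (hFlt i j hij hj)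
    rwa [hPcoords, hPcoords] at this
  have hamono : ∀ i j : ℕ, i < j → j ≤ K → a i < a j := by
    intro i j hij hj; exact_mod_cast hxmono i j hij hj
  -- concavity in index form
  have habv : ∀ i j l : ℕ, i < j → j < l → l ≤ K →
      ((b l - b i : ℤ) : ℝ) * ((a j - a i : ℤ) : ℝ) < ((b j - b i : ℤ) : ℝ) * ((a l - a i : ℤ) : ℝ) := by
    intro i j l h1 h2 h3
    have hx1 : (P (F i)).1 < (P (F j)).1 := by
      rw [hPcoords, hPcoords]; exact hxmono i j h1 (by omega)
    have hx2 : (P (F j)).1 < (P (F l)).1 := by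
      rw [hPcoords, hPcoords]; exact hxmono j l h2 h3
    have := hconc (P (F j)) (hPW _) (P (F i)) (hPW _) (P (F l)) (hPW _) hx1 hx2
    rw [Above, hPcoords, hPcoords, hPcoords] at this
    push_cast at this ⊢
    convert this using 2 <;> ring
  -- slopes
  set s : ℕ → ℝ := fun i => (((b (i+1) - b i : ℤ) : ℝ)) / (((a (i+1) - a i : ℤ) : ℝ)) with hs
  have hdx : ∀ i : ℕ, i < K → (0:ℝ) < ((a (i+1) - a i : ℤ) : ℝ) := by
    intro i hi
    have := hamono i (i+1) (by omega) (by omega)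
    push_cast; exact_mod_cast sub_pos.2 this
  have hxlt : ∀ u w : ℕ, u < w → w ≤ K → (0:ℝ) < ((a w - a u : ℤ):ℝ) := by
    intro u w h1 h2
    have := hamono u w h1 h2
    exact_mod_cast sub_pos.2 this
  have cross1 : ∀ u w z : ℕ, u < w → w < z → z ≤ K →
      ((b z - b w : ℤ):ℝ) / ((a z - a w : ℤ):ℝ) < ((b w - b u : ℤ):ℝ) / ((a w - a u : ℤ):ℝ) := by
    intro u w z h1 h2 h3
    have d1 := hxlt u w h1 (by omega)
    have d2 := hxlt w z h2 h3
    rw [div_lt_div_iff₀ d2 d1]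
    have h := habv u w z h1 h2 h3
    push_cast at h ⊢
    nlinarith [h]
  have cross2 : ∀ u w z : ℕ, u < w → w < z → z ≤ K →
      ((b z - b w : ℤ):ℝ) / ((a z - a w : ℤ):ℝ) < ((b z - b u : ℤ):ℝ) / ((a z - a u : ℤ):ℝ) := by
    intro u w z h1 h2 h3
    have d1 := hxlt u z (by omega) h3
    have d2 := hxlt w z h2 h3
    rw [div_lt_div_iff₀ d2 d1]
    have h := habv u w z h1 h2 h3
    push_cast at h ⊢
    nlinarith [h]
  have hslope : ∀ i j : ℕ, i < j → j < K → s j < s i := by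
    intro i j hij hjK
    have c1 := cross1 i (i+1) (j+1) (by omega) (by omega) (by omega)
    have hsi : s i = ((b (i+1) - b i : ℤ):ℝ) / ((a (i+1) - a i : ℤ):ℝ) := by simp only [hs]
    have hsj : s j = ((b (j+1) - b j : ℤ):ℝ) / ((a (j+1) - a j : ℤ):ℝ) := by simp only [hs]
    rcases eq_or_lt_of_le (Nat.succ_le_of_lt hij) with heq | hlt
    · rw [hsi, hsj, ← heq]
      rw [← heq] at c1
      exact c1
    · have c2 := cross2 (i+1) j (j+1) hlt (by omega) (by omega)
      rw [hsi, hsj]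
      linarith
  -- the difference vectors
  set v : ℕ → ℤ × ℤ := fun i => (a (i+1) - a i, b (i+1) - b i) with hv
  have hsv : ∀ i, s i = (((v i).2 : ℤ):ℝ) / (((v i).1 : ℤ):ℝ) := fun i => by
    simp only [hs, hv]
  have hinj : ∀ i < K, ∀ j < K, v i = v j → i = j := by
    intro i hi j hj hij
    by_contra hne
    rcases Nat.lt_or_ge i j with h | h
    · have h1 := hslope i j h hj
      have : s i = s j := by rw [hsv, hsv, hij]
      linarith
    · have h' : j < i := by omega
      have h1 := hslope j i h' hi
      have : s i = s j := by rw [hsv, hsv, hij]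
      linarith
  have hpos : ∀ i < K, 1 ≤ (v i).1 := by
    intro i hi
    have := hamono i (i+1) (by omega) (by omega)
    simp only [hv]; omega
  -- sign structure of dy
  have hsignP : ∀ i j : ℕ, i < j → j < K → 0 < b (j+1) - b j → 0 < b (i+1) - b i := by
    intro i j hij hjK hdy
    have hsj : 0 < s j := div_pos (by exact_mod_cast hdy) (hdx j hjK)
    have hsi : 0 < s i := lt_trans hsj (hslope i j hij hjK)
    have hdi := hdx i (by omega)
    have : (0:ℝ) < ((b (i+1) - b i : ℤ):ℝ) := by
      have heq : ((b (i+1) - b i : ℤ):ℝ) = s i * ((a (i+1) - a i : ℤ):ℝ) := by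
        simp only [hs]; exact (div_mul_cancel₀ _ (ne_of_gt hdi)).symm
      rw [heq]; positivity
    exact_mod_cast this
  have hsignN : ∀ i j : ℕ, i < j → j < K → b (i+1) - b i < 0 → b (j+1) - b j < 0 := by
    intro i j hij hjK hdy
    have hsi : s i < 0 := div_neg_of_neg_of_pos (by exact_mod_cast hdy) (hdx i (by omega))
    have hsj : s j < 0 := lt_trans (hslope i j hij hjK) hsi
    have hdj := hdx j hjK
    have : ((b (j+1) - b j : ℤ):ℝ) < 0 := by
      have heq : ((b (j+1) - b j : ℤ):ℝ) = s j * ((a (j+1) - a j : ℤ):ℝ) := by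
        simp only [hs]; exact (div_mul_cancel₀ _ (ne_of_gt hdj)).symm
      rw [heq]; exact mul_neg_of_neg_of_pos hsj hdj
    exact_mod_cast this
  -- sum of |dy|
  set Pset := (Finset.range K).filter (fun i => 0 < b (i+1) - b i) with hPset
  set Nset := (Finset.range K).filter (fun i => b (i+1) - b i < 0) with hNset
  have hPsum : (∑ i ∈ Pset, (b (i+1) - b i)) ≤ (n:ℤ) - 1 := by
    rcases Pset.eq_empty_or_nonempty with hem | hne
    · rw [hem, Finset.sum_empty]
      have := hn; omega
    · obtain ⟨M, hMK, hMdy, hMub⟩ : ∃ M, M < K ∧ 0 < b (M+1) - b M ∧ ∀ i ∈ Pset, i ≤ M := by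
        refine ⟨Pset.max' hne, ?_, ?_, fun i hi => Finset.le_max' _ i hi⟩ <;>
        · have hmm := Pset.max'_mem hne
          simp only [hPset, Finset.mem_filter, Finset.mem_range] at hmm
          first | exact hmm.1 | exact hmm.2
      have hPeq : Pset = Finset.range (M+1) := by
        ext i
        constructor
        · intro hi
          have := hMub i hi
          rw [Finset.mem_range]; omega
        · intro hi
          rw [Finset.mem_range] at hi
          simp only [hPset, Finset.mem_filter, Finset.mem_range]
          rcases eq_or_lt_of_le (Nat.lt_succ_iff.1 hi) with heq | hlt
          · rw [heq]; exact ⟨hMK, hMdy⟩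
          · exact ⟨by omega, hsignP i M hlt hMK hMdy⟩
      rw [hPeq, Finset.sum_range_sub b (M+1)]
      have hu := (hbb1 (M+1)).2
      have hl := (hbb1 0).1
      omega
  have hNsum : (∑ i ∈ Nset, (-(b (i+1) - b i))) ≤ (n:ℤ) - 1 := by
    rcases Nset.eq_empty_or_nonempty with hem | hne
    · rw [hem, Finset.sum_empty]
      have := hn; omega
    · obtain ⟨m', hmK, hmdy, hmlb⟩ : ∃ m', m' < K ∧ b (m'+1) - b m' < 0 ∧ ∀ i ∈ Nset, m' ≤ i := by
        refine ⟨Nset.min' hne, ?_, ?_, fun i hi => Finset.min'_le _ i hi⟩ <;>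
        · have hmm := Nset.min'_mem hne
          simp only [hNset, Finset.mem_filter, Finset.mem_range] at hmm
          first | exact hmm.1 | exact hmm.2
      have hNeq : Nset = Finset.Ico m' K := by
        ext i
        constructor
        · intro hi
          have h1 := hmlb i hi
          simp only [hNset, Finset.mem_filter, Finset.mem_range] at hi
          rw [Finset.mem_Ico]; omega
        · intro hi
          rw [Finset.mem_Ico] at hi
          simp only [hNset, Finset.mem_filter, Finset.mem_range]
          rcases eq_or_lt_of_le hi.1 with heq | hlt
          · rw [← heq]; exact ⟨hmK, hmdy⟩
          · exact ⟨hi.2, hsignN m' i hlt hi.2 hmdy⟩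
      rw [hNeq, Finset.sum_neg_distrib, Finset.sum_Ico_eq_sub _ (le_of_lt hmK),
        Finset.sum_range_sub b, Finset.sum_range_sub b]
      have hu := (hbb1 m').2
      have hl := (hbb1 K).1
      omega
  have habs : (∑ i ∈ Finset.range K, |b (i+1) - b i|) ≤ 2*(n:ℤ) - 2 := by
    have hsplit := Finset.sum_filter_add_sum_filter_not (Finset.range K)
      (fun i => 0 < b (i+1) - b i) (fun i => |b (i+1) - b i|)
    have h1 : (∑ i ∈ Pset, |b (i+1) - b i|) = ∑ i ∈ Pset, (b (i+1) - b i) := by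
      apply Finset.sum_congr rfl
      intro i hi
      simp only [hPset, Finset.mem_filter] at hi
      exact abs_of_pos hi.2
    have h2 : (∑ i ∈ (Finset.range K).filter (fun i => ¬ 0 < b (i+1) - b i), |b (i+1) - b i|)
        = ∑ i ∈ Nset, (-(b (i+1) - b i)) := by
      rw [show (∑ i ∈ (Finset.range K).filter (fun i => ¬ 0 < b (i+1) - b i), |b (i+1) - b i|)
          = ∑ i ∈ (Finset.range K).filter (fun i => ¬ 0 < b (i+1) - b i), (-(b (i+1) - b i)) from
        Finset.sum_congr rfl (fun i hi => by
          simp only [Finset.mem_filter, not_lt] at hi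
          exact abs_of_nonpos hi.2)]
      symm
      apply Finset.sum_subset
      · intro i hi
        rw [hNset, Finset.mem_filter] at hi
        rw [Finset.mem_filter]
        exact ⟨hi.1, by omega⟩
      · intro i hi hni
        rw [Finset.mem_filter] at hi
        rw [hNset, Finset.mem_filter] at hni
        have h0 : ¬ 0 < b (i+1) - b i := hi.2
        have hz : b (i+1) - b i = 0 := by
          by_contra hne2
          exact hni ⟨hi.1, by omega⟩
        omega
    rw [← hsplit, h1, h2]
    linarith [hPsum, hNsum]
  -- apply the counting lemma
  have hsum : (∑ i ∈ Finset.range K, ((v i).1 + |(v i).2|)) ≤ 3 * (n:ℤ) := by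
    rw [Finset.sum_add_distrib]
    have hd1 : (∑ i ∈ Finset.range K, (v i).1) = a K - a 0 := by
      simp only [hv]
      exact Finset.sum_range_sub a K
    have hd2 : (∑ i ∈ Finset.range K, |(v i).2|) ≤ 2*(n:ℤ) - 2 := by
      simp only [hv]; exact habs
    have := (hab1 K).2
    have := (hab1 0).1
    omega
  have hKb := count_core n K hn v hinj hpos hsum
  have hkK : (k:ℝ) = (K:ℝ) + 1 := by
    have : k = K + 1 := by omega
    rw [this]; push_cast; ring
  rw [hkK]
  linarith

/-- Any subset of the `n × n` grid in strictly convex position (every point is an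
extreme point of its convex hull) has at most `O(n^{2/3})` points. -/
theorem convex_position_grid_upper_bound :
    ∃ C : ℝ, 0 < C ∧ ∀ n : ℕ, 0 < n → ∀ S : Set (ℝ × ℝ), S ⊆ grid n →
      (∀ p ∈ S, p ∈ (convexHull ℝ S).extremePoints ℝ) →
      (S.ncard : ℝ) ≤ C * (n : ℝ) ^ ((2 : ℝ) / 3) := by
  refine ⟨64, by norm_num, ?_⟩
  intro n hn S hSg hS
  classical
  have hfinS : S.Finite := (grid_finite n).subset hSg
  -- a middle point on a vertical line is impossible
  have hmid : ∀ x y z : ℝ × ℝ, x ∈ S → y ∈ S → z ∈ S → y.1 = x.1 → z.1 = x.1 →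
      y.2 < x.2 → x.2 < z.2 → False := fun x y z hx hy hz e1 e2 l1 l2 =>
    vert_between hS hx hy hz e1 e2 l1 l2
  -- no three distinct points on a vertical line
  have hcol3 : ∀ p ∈ S, ∀ q ∈ S, ∀ r ∈ S, p.1 = q.1 → q.1 = r.1 →
      p = q ∨ p = r ∨ q = r := by
    intro p hp q hq r hr h1 h2
    by_contra hcon
    push_neg at hcon
    obtain ⟨hpq, hpr, hqr⟩ := hcon
    have hy1 : p.2 ≠ q.2 := fun h => hpq (Prod.ext h1 h)
    have hy2 : q.2 ≠ r.2 := fun h => hqr (Prod.ext h2 h)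
    have hy3 : p.2 ≠ r.2 := fun h => hpr (Prod.ext (h1.trans h2) h)
    have e_qp : q.1 = p.1 := h1.symm
    have e_rp : r.1 = p.1 := (h1.trans h2).symm
    have e_pq : p.1 = q.1 := h1
    have e_rq : r.1 = q.1 := h2.symm
    have e_pr : p.1 = r.1 := h1.trans h2
    have e_qr : q.1 = r.1 := h2
    rcases lt_trichotomy p.2 q.2 with h | h | h
    · rcases lt_trichotomy q.2 r.2 with h' | h' | h'
      · exact hmid q p r hq hp hr e_pq e_rq h h'
      · exact hy2 h'
      · rcases lt_trichotomy p.2 r.2 with h'' | h'' | h''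
        · exact hmid r p q hr hp hq e_pr e_qr h'' h'
        · exact hy3 h''
        · exact hmid p r q hp hr hq e_rp e_qp h'' h
    · exact hy1 h
    · rcases lt_trichotomy q.2 r.2 with h' | h' | h'
      · rcases lt_trichotomy p.2 r.2 with h'' | h'' | h''
        · exact hmid p q r hp hq hr e_qp e_rp h h''
        · exact hy3 h''
        · exact hmid r q p hr hq hp e_qr e_pr h' h''
      · exact hy2 h'
      · exact hmid q r p hq hr hp e_rq e_pq h' h
  -- the upper and lower chains
  set U : Set (ℝ × ℝ) :=
    {p ∈ S | ∀ q ∈ S, ∀ r ∈ S, q.1 < p.1 → p.1 < r.1 → Above p q r} with hU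
  set L : Set (ℝ × ℝ) :=
    {p ∈ S | ∀ q ∈ S, ∀ r ∈ S, q.1 < p.1 → p.1 < r.1 → Below p q r} with hL
  have hUS : U ⊆ S := fun p hp => hp.1
  have hLS : L ⊆ S := fun p hp => hp.1
  have hUL : S ⊆ U ∪ L := by
    intro p hp
    by_cases hcase : ∀ q ∈ S, ∀ r ∈ S, q.1 < p.1 → p.1 < r.1 → Above p q r
    · exact Or.inl ⟨hp, hcase⟩
    · push_neg at hcase
      obtain ⟨q0, hq0, r0, hr0, hx1, hx2, hnab⟩ := hcase
      have hbel0 : Below p q0 r0 :=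
        (extreme_dichotomy hS hp hq0 hr0 hx1 hx2).resolve_left hnab
      refine Or.inr ⟨hp, fun q hq r hr hx1' hx2' => ?_⟩
      refine (extreme_dichotomy hS hp hq hr hx1' hx2').resolve_left (fun hab => ?_)
      exact not_above_and_below hS hp hq hr hq0 hr0 hx1' hx2' hx1 hx2 hab hbel0
  -- bound the upper chain
  have hUb : (U.ncard : ℝ) ≤ 32 * (n : ℝ) ^ ((2:ℝ)/3) := by
    apply chain_bound n hn U (hUS.trans hSg)
    · intro p hp q hq r hr hx1 hx2
      exact hp.2 q (hUS hq) r (hUS hr) hx1 hx2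
    · intro p hp q hq r hr h1 h2
      exact hcol3 p (hUS hp) q (hUS hq) r (hUS hr) h1 h2
  -- bound the lower chain, via the reflection (x, y) ↦ (x, n+1-y)
  set f : ℝ × ℝ → ℝ × ℝ := fun p => (p.1, (n:ℝ) + 1 - p.2) with hf
  have hfinj : Function.Injective f := by
    intro u w h
    simp only [hf, Prod.mk.injEq] at h
    exact Prod.ext h.1 (by linarith [h.2])
  have hLb : (L.ncard : ℝ) ≤ 32 * (n : ℝ) ^ ((2:ℝ)/3) := by
    have hcardeq : (f '' L).ncard = L.ncard := Set.ncard_image_of_injective L hfinj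
    rw [← hcardeq]
    apply chain_bound n hn (f '' L)
    · rintro _ ⟨p, hpL, rfl⟩
      obtain ⟨a, b, ha1, ha2, hb1, hb2, hab⟩ := hSg (hLS hpL)
      refine ⟨a, n + 1 - b, ha1, ha2, by omega, by omega, ?_⟩
      rw [hf, hab]
      have : ((n + 1 - b : ℕ) : ℝ) = (n:ℝ) + 1 - (b:ℝ) := by
        have hble : b ≤ n + 1 := by omega
        push_cast [Nat.cast_sub hble]
        ring
      simp [this]
    · rintro _ ⟨p, hpL, rfl⟩ _ ⟨q, hqL, rfl⟩ _ ⟨r, hrL, rfl⟩ hx1 hx2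
      have hx1' : q.1 < p.1 := hx1
      have hx2' : p.1 < r.1 := hx2
      have hbel : Below p q r := hpL.2 q (hLS hqL) r (hLS hrL) hx1' hx2'
      rw [Below] at hbel
      show ((n:ℝ) + 1 - r.2 - ((n:ℝ) + 1 - q.2)) * (p.1 - q.1) <
        ((n:ℝ) + 1 - p.2 - ((n:ℝ) + 1 - q.2)) * (r.1 - q.1)
      nlinarith [hbel]
    · rintro _ ⟨p, hpL, rfl⟩ _ ⟨q, hqL, rfl⟩ _ ⟨r, hrL, rfl⟩ h1 h2
      have h1' : p.1 = q.1 := h1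
      have h2' : q.1 = r.1 := h2
      rcases hcol3 p (hLS hpL) q (hLS hqL) r (hLS hrL) h1' h2' with h | h | h
      · exact Or.inl (congrArg f h)
      · exact Or.inr (Or.inl (congrArg f h))
      · exact Or.inr (Or.inr (congrArg f h))
  have hfinU : U.Finite := hfinS.subset hUS
  have hfinL : L.Finite := hfinS.subset hLS
  have hsplit : (S.ncard : ℝ) ≤ (U.ncard : ℝ) + (L.ncard : ℝ) := by
    have h1 : S.ncard ≤ (U ∪ L).ncard :=
      Set.ncard_le_ncard hUL (hfinU.union hfinL)
    have h2 : (U ∪ L).ncard ≤ U.ncard + L.ncard := Set.ncard_union_le U L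
    exact_mod_cast h1.trans h2
  linarith
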